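/- Let F be a linearly ordered field, A a magnitude of F, a ∈ F, and suppose the coset α = a + A is zeroless (0 ∉ a + A). Then A * α⁻¹ = a⁻¹ • A, where α⁻¹ = {x⁻¹ | x ∈ α} and * is the Minkowski product of sets (the formula A/α = A/a). -/

import Mathlib

open Pointwise

/-- A *magnitude* of a linearly ordered field `F` is an order-convex additive subgroup of `F`,
given as a set: it contains `0`, is closed under addition and negation, and is order-convex. -/
def IsMagnitude {F : Type*} [Field F] [LinearOrder F] [IsStrictOrderedRing F] (A : Set F) : Prop :=
  (0 : F) ∈ A ∧ (∀ x ∈ A, ∀ y ∈ A, x + y ∈ A) ∧ (∀ x ∈ A, -x ∈ A) ∧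
    (∀ x ∈ A, ∀ y ∈ A, ∀ z : F, x ≤ z → z ≤ y → z ∈ A)

/-- Order relation on subsets of `F`: `S ≤ T` iff every element of `S` is below some element of `T`. -/
def SetLE {F : Type*} [Field F] [LinearOrder F] [IsStrictOrderedRing F] (S T : Set F) : Prop :=
  ∀ x ∈ S, ∃ y ∈ T, x ≤ y

theorem magnitude_div_coset {F : Type*} [Field F] [LinearOrder F] [IsStrictOrderedRing F]
    (A : Set F) (hA : IsMagnitude A) (a : F) (hzl : (0 : F) ∉ ({a} + A)) :
    A * ((fun x => x⁻¹) '' ({a} + A)) = a⁻¹ • A := by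
  obtain ⟨h0, hadd, hneg, hconv⟩ := hA
  have hne : ∀ y ∈ A, a + y ≠ 0 := by
    intro y hy h
    exact hzl ⟨a, rfl, y, hy, h⟩
  have ha0 : a ≠ 0 := by
    intro h
    exact hne 0 h0 (by simp [h])
  have habsA : ∀ x ∈ A, |x| ∈ A := by
    intro x hx
    rcases abs_choice x with h' | h' <;> rw [h']
    · exact hx
    · exact hneg x hx
  have habs : ∀ x ∈ A, |x| < |a| := by
    intro x hx
    by_contra h
    push_neg at h
    have haA : a ∈ A := by
      refine hconv _ (hneg _ (habsA x hx)) _ (habsA x hx) a ?_ ?_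
      · exact le_trans (neg_le_neg h) (neg_abs_le a)
      · exact le_trans (le_abs_self a) h
    exact hne (-a) (hneg a haA) (by simp)
  have h2abs : ∀ y ∈ A, 2 * |y| < |a| := by
    intro y hy
    have := habs (y + y) (hadd y hy y hy)
    calc 2 * |y| = |y + y| := by rw [← two_mul, abs_mul, abs_two]
    _ < |a| := this
  have hbig : ∀ y ∈ A, |a| ≤ 2 * |a + y| := by
    intro y hy
    have h1 : |a| - |a + y| ≤ |y| := by
      have := abs_sub_abs_le_abs_sub a (a + y)
      simpa using this.trans_eq (by ring_nf; simp [abs_neg])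
    nlinarith [h2abs y hy, abs_nonneg (a + y), abs_nonneg y]
  ext t
  simp only [Set.mem_mul, Set.mem_image, Set.mem_add, Set.mem_singleton_iff,
    Set.mem_smul_set, smul_eq_mul]
  constructor
  · rintro ⟨x, hx, w, ⟨s, ⟨u, hu, y, hy, rfl⟩, rfl⟩, rfl⟩
    subst hu
    refine ⟨u * x / (u + y), ?_, ?_⟩
    · have hay : u + y ≠ 0 := hne y hy
      have hz : |u * x / (u + y)| ≤ 2 * |x| := by
        rw [abs_div, abs_mul, div_le_iff₀ (abs_pos.2 hay)]
        have h1 := hbig y hy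
        nlinarith [abs_nonneg x, abs_nonneg (u + y)]
      have h2x : 2 * |x| ∈ A := by
        have := habsA (x + x) (hadd x hx x hx)
        rwa [← two_mul, abs_mul, abs_two] at this
      exact hconv _ (hneg _ h2x) _ h2x _ (neg_le_of_abs_le hz) (le_of_abs_le hz)
    · have hay : u + y ≠ 0 := hne y hy
      field_simp
  · rintro ⟨x, hx, rfl⟩
    exact ⟨x, hx, a⁻¹, ⟨a, ⟨a, rfl, 0, h0, by ring⟩, rfl⟩, mul_comm x a⁻¹⟩
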